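/- The Thue–Morse sequence, defined as the limit of a_0 = 0, a_{n+1} = a_n·(complement of a_n), is cube-free: for every nonempty binary string a, the string aaa does not occur as a factor of the Thue–Morse sequence. -/

import Mathlib

/-- The factor of `ω` starting at `i` of length `n`. -/
def seg {α : Type*} (ω : ℕ → α) (i n : ℕ) : List α :=
  (List.range n).map (fun k => ω (i + k))

/-- `x` occurs in `ω` at position `i`. -/
def OccursAt {α : Type*} (ω : ℕ → α) (x : List α) (i : ℕ) : Prop :=
  seg ω i x.length = x

/-- Strongly almost periodic: every factor occurs in every sufficiently long factor. -/
def SAP {α : Type*} (ω : ℕ → α) : Prop :=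
  ∀ x : List α, (∃ i, OccursAt ω x i) →
    ∃ l, ∀ j, ∃ i, j ≤ i ∧ i + x.length ≤ j + l ∧ OccursAt ω x i

/-- Almost periodic: every factor occurring infinitely often occurs in every
sufficiently long factor. -/
def AP {α : Type*} (ω : ℕ → α) : Prop :=
  ∀ x : List α, {i | OccursAt ω x i}.Infinite →
    ∃ l, ∀ j, ∃ i, j ≤ i ∧ i + x.length ≤ j + l ∧ OccursAt ω x i

/-- Eventually strongly almost periodic: some suffix is strongly almost periodic. -/
def EAP {α : Type*} (ω : ℕ → α) : Prop :=
  ∃ n, SAP (fun i => ω (n + i))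

/-- Prefixes of the Thue--Morse sequence: `a_0 = 0`, `a_{n+1} = a_n · (complement of a_n)`. -/
def tmPrefix : ℕ → List Bool
  | 0 => [false]
  | n + 1 => tmPrefix n ++ (tmPrefix n).map (fun b => !b)

/-- The Thue--Morse sequence, the pointwise limit of the prefixes `tmPrefix n`. -/
def thueMorse (i : ℕ) : Bool := (tmPrefix (i + 1)).getD i false

lemma tmPrefix_length (n : ℕ) : (tmPrefix n).length = 2 ^ n := by
  induction n with
  | zero => rfl
  | succ n ih => simp [tmPrefix, ih]; ring

lemma tmPrefix_flatMap (n : ℕ) :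
    tmPrefix (n + 1) = (tmPrefix n).flatMap (fun b => [b, !b]) := by
  induction n with
  | zero => rfl
  | succ n ih =>
    calc tmPrefix (n + 2)
        = ((tmPrefix n).flatMap (fun b => [b, !b]))
            ++ ((tmPrefix n).flatMap (fun b => [b, !b])).map (fun b => !b) := by
          show tmPrefix (n + 1) ++ (tmPrefix (n + 1)).map (fun b => !b) = _
          rw [ih]
      _ = (tmPrefix (n + 1)).flatMap (fun b => [b, !b]) := by
          show _ = (tmPrefix n ++ (tmPrefix n).map (fun b => !b)).flatMap (fun b => [b, !b])
          rw [List.flatMap_append, List.map_flatMap, List.flatMap_map]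
          simp

lemma flatMap_getD_even (l : List Bool) (m : ℕ) (h : m < l.length) :
    (l.flatMap (fun b => [b, !b])).getD (2 * m) false = l.getD m false := by
  induction l generalizing m with
  | nil => simp at h
  | cons b tl ih =>
    cases m with
    | zero => rfl
    | succ m =>
      rw [show 2 * (m + 1) = (2 * m) + 1 + 1 by ring]
      show (tl.flatMap _).getD (2 * m) false = _
      exact ih m (by simpa using h)

lemma flatMap_getD_odd (l : List Bool) (m : ℕ) (h : m < l.length) :
    (l.flatMap (fun b => [b, !b])).getD (2 * m + 1) false = ! l.getD m false := by
  induction l generalizing m with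
  | nil => simp at h
  | cons b tl ih =>
    cases m with
    | zero => rfl
    | succ m =>
      rw [show 2 * (m + 1) + 1 = (2 * m + 1) + 1 + 1 by ring]
      show (tl.flatMap _).getD (2 * m + 1) false = _
      exact ih m (by simpa using h)

lemma tmPrefix_prefix {n m : ℕ} (h : n ≤ m) : tmPrefix n <+: tmPrefix m := by
  induction m with
  | zero => rw [Nat.le_zero.mp h]
  | succ m ih =>
    rcases Nat.lt_or_ge n (m + 1) with h' | h'
    · exact (ih (by omega)).trans ⟨(tmPrefix m).map (fun b => !b), rfl⟩
    · rw [show n = m + 1 by omega]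

lemma thueMorse_eq {n i : ℕ} (h : i < 2 ^ n) :
    thueMorse i = (tmPrefix n).getD i false := by
  show (tmPrefix (i + 1)).getD i false = _
  have key : ∀ a b : ℕ, a ≤ b → i < 2 ^ a →
      (tmPrefix b).getD i false = (tmPrefix a).getD i false := by
    intro a b hab ha
    obtain ⟨r, hr⟩ := tmPrefix_prefix hab
    rw [← hr, List.getD_append _ _ _ _ (by rw [tmPrefix_length]; exact ha)]
  have hi : i < 2 ^ (i + 1) :=
    lt_of_lt_of_le (Nat.lt_two_pow_self (n := i)) (Nat.pow_le_pow_right (by norm_num) (by omega))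
  rcases Nat.le_total n (i + 1) with h' | h'
  · exact key n (i + 1) h' h
  · exact (key (i + 1) n h' hi).symm

lemma tm_even (m : ℕ) : thueMorse (2 * m) = thueMorse m := by
  have hm : m < 2 ^ m := Nat.lt_two_pow_self (n := m)
  have h2 : 2 * m < 2 ^ (m + 1) := by rw [pow_succ]; omega
  rw [thueMorse_eq h2, thueMorse_eq hm, tmPrefix_flatMap,
    flatMap_getD_even _ _ (by rw [tmPrefix_length]; exact hm)]

lemma tm_odd (m : ℕ) : thueMorse (2 * m + 1) = ! thueMorse m := by
  have hm : m < 2 ^ m := Nat.lt_two_pow_self (n := m)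
  have h2 : 2 * m + 1 < 2 ^ (m + 1) := by rw [pow_succ]; omega
  rw [thueMorse_eq h2, thueMorse_eq hm, tmPrefix_flatMap,
    flatMap_getD_odd _ _ (by rw [tmPrefix_length]; exact hm)]

lemma no_three (r : ℕ) (h1 : thueMorse r = thueMorse (r + 1))
    (h2 : thueMorse (r + 1) = thueMorse (r + 2)) : False := by
  rcases Nat.even_or_odd r with ⟨q, hq⟩ | ⟨q, hq⟩
  · rw [show r = 2 * q by omega, show 2 * q + 1 = 2 * q + 1 by rfl] at h1
    rw [tm_even, tm_odd] at h1
    simp at h1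
  · rw [show r + 1 = 2 * (q + 1) by omega, show r + 2 = 2 * (q + 1) + 1 by omega,
      tm_even, tm_odd] at h2
    simp at h2

lemma no_overlap : ∀ n, 1 ≤ n → ∀ i,
    ¬ (∀ k, k ≤ n → thueMorse (i + k) = thueMorse (i + n + k)) := by
  intro n
  induction n using Nat.strong_induction_on with
  | _ n IH =>
  intro hn i h
  have hper : ∀ p, i ≤ p → p ≤ i + n → thueMorse p = thueMorse (p + n) := by
    intro p h1 h2
    have := h (p - i) (by omega)
    rwa [show i + (p - i) = p by omega, show i + n + (p - i) = p + n by omega] at this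
  rcases Nat.even_or_odd n with ⟨m, hm⟩ | ⟨s, hs⟩
  · -- n = 2m, m ≥ 1
    have hm1 : 1 ≤ m := by omega
    rcases Nat.even_or_odd i with ⟨j, hj⟩ | ⟨j, hj⟩
    · apply IH m (by omega) hm1 j
      intro k hk
      have := hper (2 * (j + k)) (by omega) (by omega)
      rwa [show 2 * (j + k) + n = 2 * (j + m + k) by omega, tm_even, tm_even] at this
    · apply IH m (by omega) hm1 j
      intro k hk
      have := hper (2 * (j + k) + 1) (by omega) (by omega)
      rw [show 2 * (j + k) + 1 + n = 2 * (j + m + k) + 1 by omega, tm_odd, tm_odd] at this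
      simpa using this
  · -- n = 2s+1
    rcases Nat.eq_or_lt_of_le hn with h1 | h3
    · -- n = 1
      obtain rfl : n = 1 := h1.symm
      exact no_three i (hper i (le_refl i) (by omega))
        (hper (i + 1) (by omega) (by omega))
    have hs1 : 1 ≤ s := by omega
    rcases Nat.even_or_odd i with ⟨j, hj⟩ | ⟨j, hj⟩
    · -- i = 2j : get t(j+s) = t(j+s+1) = t(j+s+2)
      have E0 := hper (2 * j) (by omega) (by omega)
      rw [show 2 * j + n = 2 * (j + s) + 1 by omega, tm_even, tm_odd] at E0
      have E1 := hper (2 * j + 2) (by omega) (by omega)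
      rw [show 2 * j + 2 = 2 * (j + 1) by ring, show 2 * (j + 1) + n = 2 * (j + s + 1) + 1 by omega,
        tm_even, tm_odd] at E1
      have O0 := hper (2 * j + 1) (by omega) (by omega)
      rw [show 2 * j + 1 + n = 2 * (j + s + 1) by omega, tm_odd, tm_even] at O0
      have O1 := hper (2 * j + 3) (by omega) (by omega)
      rw [show 2 * j + 3 = 2 * (j + 1) + 1 by ring, show 2 * (j + 1) + 1 + n = 2 * (j + s + 2) by omega,
        tm_odd, tm_even] at O1
      apply no_three (j + s)
      · rw [← O0, E0, Bool.not_not]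
      · rw [show j + s + 2 = j + s + 1 + 1 by ring, ← O1,
          show j + s + 1 = j + 1 + s by ring, E1, Bool.not_not]
        rw [show j + 1 + s = j + s + 1 by ring]
    · -- i = 2j+1 : get t j = t(j+1) = t(j+2)
      have O0 := hper (2 * j + 1) (by omega) (by omega)
      rw [show 2 * j + 1 + n = 2 * (j + s + 1) by omega, tm_odd, tm_even] at O0
      have E0 := hper (2 * j + 2) (by omega) (by omega)
      rw [show 2 * j + 2 = 2 * (j + 1) by ring, show 2 * (j + 1) + n = 2 * (j + s + 1) + 1 by omega,
        tm_even, tm_odd] at E0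
      have O1 := hper (2 * j + 3) (by omega) (by omega)
      rw [show 2 * j + 3 = 2 * (j + 1) + 1 by ring, show 2 * (j + 1) + 1 + n = 2 * (j + s + 2) by omega,
        tm_odd, tm_even] at O1
      have E1 := hper (2 * j + 4) (by omega) (by omega)
      rw [show 2 * j + 4 = 2 * (j + 2) by ring, show 2 * (j + 2) + n = 2 * (j + s + 2) + 1 by omega,
        tm_even, tm_odd] at E1
      apply no_three j
      · rw [E0, ← O0, Bool.not_not]
      · rw [show j + 2 = j + 1 + 1 by rfl] at E1 ⊢
        rw [E1, ← O1, Bool.not_not]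

lemma seg_getD (ω : ℕ → Bool) (i n j : ℕ) (h : j < n) :
    (seg ω i n).getD j false = ω (i + j) := by
  unfold seg
  rw [List.getD_eq_getElem _ _ (by simpa using h)]
  simp

lemma cube_period (a : List Bool) (j : ℕ) (hj : j < 2 * a.length) :
    (a ++ a ++ a).getD j false = (a ++ a ++ a).getD (j + a.length) false := by
  by_cases h : j < a.length
  · rw [List.getD_append _ _ _ _ (by simp; omega),
      List.getD_append _ _ _ _ h,
      List.getD_append _ _ _ _ (by simp; omega),
      List.getD_append_right _ _ _ _ (by omega)]
    congr 1
    omega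
  · rw [List.getD_append _ _ _ _ (by simp; omega),
      List.getD_append_right _ _ _ _ (by omega),
      List.getD_append_right _ _ _ _ (by simp; omega)]
    congr 1
    simp
    omega

/-- The Thue--Morse sequence is cube-free. -/
theorem thueMorse_cubeFree :
    ∀ a : List Bool, a ≠ [] → ¬ ∃ i, OccursAt thueMorse (a ++ a ++ a) i := by
  rintro a ha ⟨i, hocc⟩
  set n := a.length with hn
  have hn1 : 1 ≤ n := List.length_pos_iff.mpr ha
  have hlen : (a ++ a ++ a).length = 3 * n := by simp [hn]; ring
  have hpt : ∀ j, j < 3 * n → thueMorse (i + j) = (a ++ a ++ a).getD j false := by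
    intro j hj
    rw [← seg_getD thueMorse i (3 * n) j hj]
    unfold OccursAt at hocc
    rw [hlen] at hocc
    rw [hocc]
  apply no_overlap n hn1 i
  intro k hk
  rw [hpt k (by omega), show i + n + k = i + (k + n) by ring, hpt (k + n) (by omega)]
  exact cube_period a k (by omega)
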